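/- Let a ∈ ℂ with a ≠ 1 and a ≠ −1. In the quotient V = (L × L)/range(T) for the quartic curve u² = x⁴ − 2ax² + 1, the two classes [1] (the class of (1, 0)) and [X²] (the class of (X², 0)) are linearly independent over ℂ. In particular the even-positive sector of A/∂A is not generated by a single element. -/

import Mathlib

open LaurentPolynomial

/-- The linear map `T(f,g) = (p * D g + w * g, D f)` on `L × L`, encoding the distinguished
derivation of the superelliptic algebra (even part `L`, odd part `L * u`), where `p = P`
and `w` is the odd-weight term `u * u' = P'/2`. -/
noncomputable def Tgen (p w : LaurentPolynomial ℂ)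
    (D : LaurentPolynomial ℂ →ₗ[ℂ] LaurentPolynomial ℂ) :
    (LaurentPolynomial ℂ × LaurentPolynomial ℂ) →ₗ[ℂ]
      (LaurentPolynomial ℂ × LaurentPolynomial ℂ) where
  toFun fg := (p * D fg.2 + w * fg.2, D fg.1)
  map_add' x y := by
    ext
    · simp only [Prod.fst_add, Prod.snd_add, map_add]
      ring_nf
    · simp [Prod.snd_add]
  map_smul' c x := by
    ext
    · simp only [Prod.smul_fst, Prod.smul_snd, map_smul, smul_add, mul_smul_comm,
        RingHom.id_apply]
    · simp

/-- The derivation map for the quartic curve: `P = X^4 - 2aX^2 + 1`, `P'/2 = 2X^3 - 2aX`. -/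
noncomputable def Tquart (a : ℂ)
    (D : LaurentPolynomial ℂ →ₗ[ℂ] LaurentPolynomial ℂ) :
    (LaurentPolynomial ℂ × LaurentPolynomial ℂ) →ₗ[ℂ]
      (LaurentPolynomial ℂ × LaurentPolynomial ℂ) :=
  Tgen (T 4 - 2 * C a * T 2 + 1) (2 * T 3 - 2 * C a * T 1) D

lemma lsmul_apply' (c : ℂ) (f : LaurentPolynomial ℂ) (k : ℤ) : (c • f).coeff k = c * f.coeff k := rfl

lemma Dcoeff (D : LaurentPolynomial ℂ →ₗ[ℂ] LaurentPolynomial ℂ)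
    (hD : ∀ n : ℤ, D (T n) = (n : ℂ) • T (n - 1)) (g : LaurentPolynomial ℂ) (k : ℤ) :
    (D g).coeff k = ((k : ℂ) + 1) * g.coeff (k + 1) := by
  induction g using AddMonoidAlgebra.induction_linear with
  | zero => simp
  | add f g hf hg => rw [map_add, AddMonoidAlgebra.coeff_add, AddMonoidAlgebra.coeff_add, Finsupp.add_apply, Finsupp.add_apply, hf, hg]; ring
  | single n b =>
    have h1 : (AddMonoidAlgebra.single n b : LaurentPolynomial ℂ) = b • T n := by
      rw [LaurentPolynomial.T, AddMonoidAlgebra.smul_single, smul_eq_mul, mul_one]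
    rw [h1, map_smul, hD n]
    rw [lsmul_apply', lsmul_apply', lsmul_apply', T_apply, T_apply]
    by_cases h : n = k + 1
    · subst h; rw [if_pos (by omega : k + 1 - 1 = k), if_pos rfl]; push_cast; ring
    · rw [if_neg (by omega), if_neg h]; ring

lemma single_decomp (a : ℂ) :
    (T 4 - 2 * C a * T 2 + 1 : LaurentPolynomial ℂ)
      = AddMonoidAlgebra.single 4 1 - AddMonoidAlgebra.single 2 (2 * a) + AddMonoidAlgebra.single 0 1 ∧
    (2 * T 3 - 2 * C a * T 1 : LaurentPolynomial ℂ)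
      = AddMonoidAlgebra.single 3 2 - AddMonoidAlgebra.single 1 (2 * a) := by
  have hC2 : (C (2 : ℂ) : LaurentPolynomial ℂ) = 2 := map_ofNat C 2
  constructor
  · rw [single_eq_C_mul_T, single_eq_C_mul_T, single_eq_C_mul_T, map_mul, hC2]
    simp only [map_one, one_mul, LaurentPolynomial.T_zero, mul_one]
  · rw [single_eq_C_mul_T, single_eq_C_mul_T, map_mul, hC2]

/-- The key coefficient formula for the first component of `Tquart`. -/
lemma Tquart_coeff (a : ℂ) (D : LaurentPolynomial ℂ →ₗ[ℂ] LaurentPolynomial ℂ)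
    (hD : ∀ n : ℤ, D (T n) = (n : ℂ) • T (n - 1)) (g : LaurentPolynomial ℂ)
    (h : LaurentPolynomial ℂ)
    (hh : h = (T 4 - 2 * C a * T 2 + 1) * D g + (2 * T 3 - 2 * C a * T 1) * g) (k : ℤ) :
    h.coeff k
      = ((k : ℂ) - 1) * g.coeff (k - 3) - 2 * a * k * g.coeff (k - 1) + ((k : ℂ) + 1) * g.coeff (k + 1) := by
  obtain ⟨h1, h2⟩ := single_decomp a
  rw [hh, h1, h2, sub_mul, add_mul, sub_mul, AddMonoidAlgebra.coeff_add, AddMonoidAlgebra.coeff_sub,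
    AddMonoidAlgebra.coeff_add, AddMonoidAlgebra.coeff_sub, Finsupp.add_apply, Finsupp.sub_apply,
    Finsupp.add_apply, Finsupp.sub_apply,
    AddMonoidAlgebra.coeff_single_mul_apply, AddMonoidAlgebra.coeff_single_mul_apply,
    AddMonoidAlgebra.coeff_single_mul_apply, AddMonoidAlgebra.coeff_single_mul_apply,
    AddMonoidAlgebra.coeff_single_mul_apply,
    Dcoeff D hD, Dcoeff D hD, Dcoeff D hD]
  have e1 : (-4 + k) + 1 = k - 3 := by ring
  have e2 : (-2 + k) + 1 = k - 1 := by ring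
  have e3 : (-0 + k) + 1 = k + 1 := by ring
  have e4 : (-3 + k : ℤ) = k - 3 := by ring
  have e5 : (-1 + k : ℤ) = k - 1 := by ring
  rw [e1, e2, e3, e4, e5]
  push_cast
  ring

/-- for `a ≠ ±1`, the classes `[1]` and `[X²]` are linearly independent
in the quotient `V` for the quartic curve; the even-positive sector is not generated by a
single element. -/
theorem quartic_even_sector_independent (a : ℂ) (ha1 : a ≠ 1) (ha2 : a ≠ -1)
    (D : LaurentPolynomial ℂ →ₗ[ℂ] LaurentPolynomial ℂ)
    (hD : ∀ n : ℤ, D (T n) = (n : ℂ) • T (n - 1)) :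
    LinearIndependent ℂ
      ![(LinearMap.range (Tquart a D)).mkQ (1, 0),
        (LinearMap.range (Tquart a D)).mkQ (T 2, 0)] := by
  rw [LinearIndependent.pair_iff]
  intro s t hst
  rw [← map_smul, ← map_smul, ← map_add] at hst
  have hmem : s • ((1 : LaurentPolynomial ℂ), (0 : LaurentPolynomial ℂ)) + t • (T 2, 0)
      ∈ LinearMap.range (Tquart a D) := by
    rwa [Submodule.mkQ_apply, Submodule.Quotient.mk_eq_zero] at hst
  obtain ⟨⟨f, g⟩, hfg⟩ := hmem
  have heq : (T 4 - 2 * C a * T 2 + 1) * D g + (2 * T 3 - 2 * C a * T 1) * g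
      = s • (1 : LaurentPolynomial ℂ) + t • T 2 := by
    have := congrArg Prod.fst hfg
    simpa [Tquart, Tgen, Prod.smul_fst, Prod.fst_add] using this
  -- coefficient relation
  have hco : ∀ k : ℤ, ((k : ℂ) - 1) * g.coeff (k - 3) - 2 * a * k * g.coeff (k - 1)
      + ((k : ℂ) + 1) * g.coeff (k + 1)
      = (if (0 : ℤ) = k then s else 0) + (if (2 : ℤ) = k then t else 0) := by
    intro k
    have hk := congrArg (fun p : LaurentPolynomial ℂ => p.coeff k) heq
    rw [← (Tquart_coeff a D hD g _ rfl k), hk, AddMonoidAlgebra.coeff_add, Finsupp.add_apply, lsmul_apply',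
      lsmul_apply', T_apply]
    have : (1 : LaurentPolynomial ℂ).coeff k = if (0 : ℤ) = k then 1 else 0 := by
      rw [← LaurentPolynomial.T_zero, T_apply]
    rw [this]
    split_ifs <;> ring
  -- support bounds
  obtain ⟨N, hN⟩ := g.coeff.support.bddAbove
  obtain ⟨M, hM⟩ := g.coeff.support.bddBelow
  have hgN : ∀ j : ℤ, N < j → g.coeff j = 0 := by
    intro j hj
    by_contra h
    exact absurd (hN (Finsupp.mem_support_iff.mpr h)) (by omega)
  have hgM : ∀ j : ℤ, j < M → g.coeff j = 0 := by
    intro j hj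
    by_contra h
    exact absurd (hM (Finsupp.mem_support_iff.mpr h)) (by omega)
  -- descending step for positive indices
  have key₁ : ∀ j : ℤ, 1 ≤ j → g.coeff (j + 2) = 0 → g.coeff (j + 4) = 0 → g.coeff j = 0 := by
    intro j hj h2 h4
    have hc := hco (j + 3)
    rw [if_neg (by omega), if_neg (by omega)] at hc
    have e1 : j + 3 - 3 = j := by ring
    have e2 : j + 3 - 1 = j + 2 := by ring
    have e3 : j + 3 + 1 = j + 4 := by ring
    rw [e1, e2, e3, h2, h4] at hc
    have hc' : ((j : ℂ) + 2) * g.coeff j = 0 := by push_cast at hc ⊢; linear_combination hc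
    have hne : ((j : ℂ) + 2) ≠ 0 := by
      have : ((j + 2 : ℤ) : ℂ) ≠ 0 := Int.cast_ne_zero.mpr (by omega)
      push_cast at this; exact this
    exact (mul_eq_zero.mp hc').resolve_left hne
  -- ascending step for negative indices
  have key₂ : ∀ j : ℤ, j ≤ -1 → g.coeff (j - 2) = 0 → g.coeff (j - 4) = 0 → g.coeff j = 0 := by
    intro j hj h2 h4
    have hc := hco (j - 1)
    rw [if_neg (by omega), if_neg (by omega)] at hc
    have e1 : j - 1 - 3 = j - 4 := by ring
    have e2 : j - 1 - 1 = j - 2 := by ring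
    have e3 : j - 1 + 1 = j := by ring
    rw [e1, e2, e3, h2, h4] at hc
    have hc' : ((j : ℂ)) * g.coeff j = 0 := by push_cast at hc ⊢; linear_combination hc
    have hne : ((j : ℂ)) ≠ 0 := Int.cast_ne_zero.mpr (by omega)
    exact (mul_eq_zero.mp hc').resolve_left hne
  -- all positive coefficients of g vanish
  have up : ∀ n : ℕ, ∀ j : ℤ, 1 ≤ j → N ≤ j + n → g.coeff j = 0 := by
    intro n
    induction n using Nat.strong_induction_on with
    | _ n ih =>
      intro j hj hn
      by_cases hNj : N < j
      · exact hgN j hNj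
      · apply key₁ j hj
        · by_cases h2 : N < j + 2
          · exact hgN _ h2
          · exact ih (n - 1) (by omega) (j + 2) (by omega) (by push_cast; omega)
        · by_cases h4 : N < j + 4
          · exact hgN _ h4
          · exact ih (n - 1) (by omega) (j + 4) (by omega) (by push_cast; omega)
  have hup : ∀ j : ℤ, 1 ≤ j → g.coeff j = 0 := by
    intro j hj
    rcases le_or_gt N j with h | h
    · exact up 0 j hj (by push_cast; omega)
    · exact up (N - j).toNat j hj (by omega)
  -- all negative coefficients of g vanish
  have down : ∀ n : ℕ, ∀ j : ℤ, j ≤ -1 → j - n ≤ M → g.coeff j = 0 := by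
    intro n
    induction n using Nat.strong_induction_on with
    | _ n ih =>
      intro j hj hn
      by_cases hMj : j < M
      · exact hgM j hMj
      · apply key₂ j hj
        · by_cases h2 : j - 2 < M
          · exact hgM _ h2
          · exact ih (n - 1) (by omega) (j - 2) (by omega) (by push_cast; omega)
        · by_cases h4 : j - 4 < M
          · exact hgM _ h4
          · exact ih (n - 1) (by omega) (j - 4) (by omega) (by push_cast; omega)
  have hdown : ∀ j : ℤ, j ≤ -1 → g.coeff j = 0 := by
    intro j hj
    rcases lt_or_ge j M with h | h
    · exact down 0 j hj (by push_cast; omega)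
    · exact down (j - M).toNat j hj (by omega)
  -- conclude
  have hs : s = 0 := by
    have hc := hco 0
    rw [if_pos rfl, if_neg (by omega)] at hc
    rw [hdown (0 - 3) (by omega), hdown (0 - 1) (by omega), hup (0 + 1) (by omega)] at hc
    simpa using hc.symm
  have ht : t = 0 := by
    have hc := hco 2
    rw [if_neg (by omega), if_pos rfl] at hc
    rw [hdown (2 - 3) (by omega), hup (2 - 1) (by omega), hup (2 + 1) (by omega)] at hc
    simpa using hc.symm
  exact ⟨hs, ht⟩
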